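/- arXiv:1608.07395 — 3 statements merged into one kernel-verified Lean document; each statement's English description precedes it below -/
import Mathlib

section
/- Let A be a unital Banach algebra and let g be invertible in A and h invertible in A. Then in the group GL₂(A) of invertible 2×2 matrices over A, the commutator diag(ghg⁻¹h⁻¹, 1) equals a product of elements each of which lies in the connected component of the identity of GL₂(A); in particular diag(ghg⁻¹h⁻¹, 1) lies in the path component of the identity of GL₂(A). -/
open scoped Matrix
open Real Matrix

noncomputable section WhiteheadAux

variable {A : Type} [NormedRing A] [NormedAlgebra ℂ A]

/-- Rotation matrix over ℂ. -/
def rotC (t : ℝ) : Matrix (Fin 2) (Fin 2) ℂ :=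
  !![(Real.cos t : ℂ), -(Real.sin t : ℂ); (Real.sin t : ℂ), (Real.cos t : ℂ)]

def rotC' (t : ℝ) : Matrix (Fin 2) (Fin 2) ℂ :=
  !![(Real.cos t : ℂ), (Real.sin t : ℂ); -(Real.sin t : ℂ), (Real.cos t : ℂ)]

lemma rotC_mul_rotC' (t : ℝ) : rotC t * rotC' t = 1 := by
  simp only [rotC, rotC', Matrix.mul_fin_two]
  ext i j
  fin_cases i <;> fin_cases j <;>
    simp [Matrix.one_apply] <;> ring_nf <;>
    simp [Complex.sin_sq_add_cos_sq, Complex.cos_sq_add_sin_sq]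

lemma rotC'_mul_rotC (t : ℝ) : rotC' t * rotC t = 1 := by
  simp only [rotC, rotC', Matrix.mul_fin_two]
  ext i j
  fin_cases i <;> fin_cases j <;>
    simp [Matrix.one_apply] <;> ring_nf <;>
    simp [Complex.sin_sq_add_cos_sq, Complex.cos_sq_add_sin_sq]

/-- Rotation matrix as a unit. -/
def rotUC (t : ℝ) : (Matrix (Fin 2) (Fin 2) ℂ)ˣ :=
  ⟨rotC t, rotC' t, rotC_mul_rotC' t, rotC'_mul_rotC t⟩

/-- The entrywise `algebraMap` ring hom. -/
def φ (A : Type) [NormedRing A] [NormedAlgebra ℂ A] :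
    Matrix (Fin 2) (Fin 2) ℂ →+* Matrix (Fin 2) (Fin 2) A :=
  (algebraMap ℂ A).mapMatrix

/-- Rotation unit over `A`. -/
def rotUA (A : Type) [NormedRing A] [NormedAlgebra ℂ A] (t : ℝ) :
    (Matrix (Fin 2) (Fin 2) A)ˣ :=
  Units.map (φ A).toMonoidHom (rotUC t)

lemma rotUA_val (t : ℝ) : (rotUA A t).val = (φ A) (rotC t) := rfl

lemma rotUA_inv_val (t : ℝ) :
    ((rotUA A t)⁻¹ : (Matrix (Fin 2) (Fin 2) A)ˣ).val = (φ A) (rotC' t) := rfl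

/-- diag(u,1) as a unit. -/
def diagU (u : Aˣ) : (Matrix (Fin 2) (Fin 2) A)ˣ where
  val := Matrix.diagonal ![(u : A), 1]
  inv := Matrix.diagonal ![(↑u⁻¹ : A), 1]
  val_inv := by
    rw [Matrix.diagonal_mul_diagonal]
    ext i j
    fin_cases i <;> fin_cases j <;> simp
  inv_val := by
    rw [Matrix.diagonal_mul_diagonal]
    ext i j
    fin_cases i <;> fin_cases j <;> simp

/-- The basic commutator path, as a unit, at angle `t`. -/
def Γ (u : Aˣ) (t : ℝ) : (Matrix (Fin 2) (Fin 2) A)ˣ :=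
  diagU u * rotUA A t * diagU u⁻¹ * (rotUA A t)⁻¹

lemma Γ_val (u : Aˣ) (t : ℝ) :
    (Γ u t).val =
      Matrix.diagonal ![(u : A), 1] * (φ A) (rotC t) *
        Matrix.diagonal ![(↑u⁻¹ : A), 1] * (φ A) (rotC' t) := rfl

lemma continuous_rotA : Continuous fun t : ℝ => (φ A) (rotC t) := by
  apply continuous_matrix
  intro i j
  fin_cases i <;> fin_cases j <;>
    simp [φ, rotC, RingHom.mapMatrix_apply, Matrix.map_apply] <;>
    fun_prop

lemma continuous_rotA' : Continuous fun t : ℝ => (φ A) (rotC' t) := by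
  apply continuous_matrix
  intro i j
  fin_cases i <;> fin_cases j <;>
    simp [φ, rotC', RingHom.mapMatrix_apply, Matrix.map_apply] <;>
    fun_prop

lemma continuous_Γ_val (u : Aˣ) :
    Continuous fun t : ℝ => (Γ u t).val := by
  simp only [Γ_val]
  exact ((continuous_const.matrix_mul continuous_rotA).matrix_mul
    continuous_const).matrix_mul continuous_rotA'

lemma rotC_zero : rotC 0 = 1 := by
  ext i j
  fin_cases i <;> fin_cases j <;> simp [rotC, Matrix.one_apply]

lemma rotC'_zero : rotC' 0 = 1 := by
  ext i j
  fin_cases i <;> fin_cases j <;> simp [rotC', Matrix.one_apply]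

lemma Γ_val_zero (u : Aˣ) : (Γ u 0).val = 1 := by
  rw [Γ_val, rotC_zero, rotC'_zero, _root_.map_one, mul_one, mul_one]
  exact (diagU u).val_inv

lemma rotC_half : rotC (π / 2) = !![0, -1; 1, 0] := by
  ext i j
  fin_cases i <;> fin_cases j <;> simp [rotC]

lemma rotC'_half : rotC' (π / 2) = !![0, 1; -1, 0] := by
  ext i j
  fin_cases i <;> fin_cases j <;> simp [rotC']

lemma Γ_val_half (u : Aˣ) :
    (Γ u (π / 2)).val = Matrix.diagonal ![(u : A), ↑u⁻¹] := by
  rw [Γ_val, rotC_half, rotC'_half]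
  have h1 : (φ A) !![(0 : ℂ), -1; 1, 0] = !![(0 : A), -1; 1, 0] := by
    ext i j
    fin_cases i <;> fin_cases j <;>
      simp [φ, RingHom.mapMatrix_apply, Matrix.map_apply]
  have h2 : (φ A) !![(0 : ℂ), 1; -1, 0] = !![(0 : A), 1; -1, 0] := by
    ext i j
    fin_cases i <;> fin_cases j <;>
      simp [φ, RingHom.mapMatrix_apply, Matrix.map_apply]
  rw [h1, h2]
  ext i j
  fin_cases i <;> fin_cases j <;>
    simp [Matrix.mul_apply, Fin.sum_univ_two, Matrix.diagonal]

end WhiteheadAux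

/-- Whitehead lemma variant: for invertible elements `g, h` of a unital Banach algebra `A`,
the diagonal matrix `diag(ghg⁻¹h⁻¹, 1)` lies in the path component of the identity of
`GL₂(A)`: there is a continuous path of invertible `2 × 2` matrices over `A` from the
identity matrix to `diag(ghg⁻¹h⁻¹, 1)`. -/
theorem whitehead_commutator_in_identity_component
    {A : Type} [NormedRing A] [NormedAlgebra ℂ A] [CompleteSpace A]
    (g h : Aˣ) :
    ∃ γ : ℝ → Matrix (Fin 2) (Fin 2) A,
      Continuous γ ∧
      γ 0 = (1 : Matrix (Fin 2) (Fin 2) A) ∧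
      γ 1 = Matrix.diagonal ![((g : A) * h * ↑g⁻¹ * ↑h⁻¹), 1] ∧
      ∀ t : ℝ, IsUnit (γ t) := by
  refine ⟨fun t => (Γ g (π * t / 2) * Γ h (π * t / 2) * Γ ((h * g)⁻¹) (π * t / 2)).val,
    ?_, ?_, ?_, ?_⟩
  · have hc : Continuous fun t : ℝ => π * t / 2 := by fun_prop
    simp only [Units.val_mul]
    exact (((continuous_Γ_val g).comp hc).mul ((continuous_Γ_val h).comp hc)).mul
      ((continuous_Γ_val ((h * g)⁻¹)).comp hc)
  · simp only [Units.val_mul, mul_zero, zero_div, Γ_val_zero, mul_one, one_mul]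
  · have h1 : π * 1 / 2 = π / 2 := by ring
    simp only [Units.val_mul, h1, Γ_val_half, Matrix.diagonal_mul_diagonal]
    ext i j
    fin_cases i <;> fin_cases j <;> simp [Matrix.diagonal, mul_assoc]
  · intro t
    exact Units.isUnit _
end

section
/- Let N be a semifinite von Neumann algebra with faithful normal semifinite trace τ. If x ∈ N is self-adjoint with ‖x‖ ≤ π, then e^{ix} − 1 lies in the trace ideal L¹_τ(N) if and only if x lies in L¹_τ(N). -/
set_option synthInstance.maxHeartbeats 1000000
set_option maxHeartbeats 1000000

open scoped ENNReal NNReal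

variable {H : Type} [NormedAddCommGroup H] [InnerProductSpace ℂ H] [CompleteSpace H]

/-- The absolute value `|x| = (x*x)^{1/2}` of a bounded operator, via the
continuous functional calculus. -/
noncomputable def absOp (x : H →L[ℂ] H) : H →L[ℂ] H := CFC.sqrt (star x * x)

/-- `τ : N₊ → [0,∞]` is a faithful normal semifinite trace on the von Neumann algebra `N`.
The function `τ` is defined on all operators but its properties only concern positive
elements of `N`. -/
structure IsFNSTrace (N : VonNeumannAlgebra H) (τ : (H →L[ℂ] H) → ℝ≥0∞) : Prop where
  map_zero : τ 0 = 0
  additive : ∀ x y : H →L[ℂ] H, x ∈ N → y ∈ N → 0 ≤ x → 0 ≤ y → τ (x + y) = τ x + τ y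
  homogeneous : ∀ (c : ℝ≥0) (x : H →L[ℂ] H), x ∈ N → 0 ≤ x → τ (c • x) = c * τ x
  tracial : ∀ x : H →L[ℂ] H, x ∈ N → τ (star x * x) = τ (x * star x)
  faithful : ∀ x : H →L[ℂ] H, x ∈ N → 0 ≤ x → τ x = 0 → x = 0
  monotone : ∀ x y : H →L[ℂ] H, x ∈ N → y ∈ N → 0 ≤ x → x ≤ y → τ x ≤ τ y
  normal : ∀ (ι : Type) (_ : Preorder ι) (f : ι → (H →L[ℂ] H)) (x : H →L[ℂ] H),
      (∀ i, f i ∈ N) → (∀ i, 0 ≤ f i) → Monotone f → IsLUB (Set.range f) x →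
      τ x = ⨆ i, τ (f i)
  semifinite : ∀ x : H →L[ℂ] H, x ∈ N → 0 ≤ x → x ≠ 0 →
      ∃ y : H →L[ℂ] H, y ∈ N ∧ 0 ≤ y ∧ y ≤ x ∧ y ≠ 0 ∧ τ y < ∞

/-- Membership in the trace ideal `L¹_τ(N) = {x ∈ N : τ(|x|) < ∞}`. -/
def MemL1 (N : VonNeumannAlgebra H) (τ : (H →L[ℂ] H) → ℝ≥0∞) (x : H →L[ℂ] H) : Prop :=
  x ∈ N ∧ τ (absOp x) < ∞

/-- The norm `‖x‖_{1,∞} = ‖x‖ + τ(|x|)` on the trace ideal. -/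
noncomputable def normL1 (τ : (H →L[ℂ] H) → ℝ≥0∞) (x : H →L[ℂ] H) : ℝ :=
  ‖x‖ + (τ (absOp x)).toReal



open scoped Real

section ScalarLemmas

lemma norm_expI_sub_one' (t : ℝ) :
    ‖Complex.exp (Complex.I * t) - 1‖ = 2 * |Real.sin (t / 2)| := by
  rw [mul_comm, Complex.exp_mul_I]
  have h1 : Complex.cos t + Complex.sin t * Complex.I - 1
      = Complex.mk (Real.cos t - 1) (Real.sin t) := by
    apply Complex.ext <;> simp [Complex.cos_ofReal_re, Complex.sin_ofReal_re]
  rw [h1]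
  rw [Complex.norm_def, Complex.normSq_mk]
  have hs : Real.cos t = 2 * Real.cos (t/2)^2 - 1 := by
    rw [← Real.cos_two_mul]; ring_nf
  have hc : Real.sin (t/2)^2 + Real.cos (t/2)^2 = 1 := Real.sin_sq_add_cos_sq _
  have hc2 : Real.sin t ^2 + Real.cos t ^2 = 1 := Real.sin_sq_add_cos_sq _
  have h2 : (Real.cos t - 1) * (Real.cos t - 1) + Real.sin t * Real.sin t
      = (2 * |Real.sin (t/2)|) ^ 2 := by
    rw [mul_pow, sq_abs]
    nlinarith [hs, hc, hc2]
  rw [h2, Real.sqrt_sq (by positivity)]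

lemma expI_le' (t : ℝ) : ‖Complex.exp (Complex.I * t) - 1‖ ≤ |t| := by
  rw [norm_expI_sub_one']
  have h : |Real.sin (t/2)| ≤ |t/2| := by
    rcases eq_or_ne (t/2) 0 with h0 | h0
    · simp [h0]
    · have := Real.sin_sq_lt_sq h0
      nlinarith [abs_nonneg (Real.sin (t/2)), abs_nonneg (t/2), sq_abs (Real.sin (t/2)),
        sq_abs (t/2)]
  calc 2 * |Real.sin (t/2)| ≤ 2 * |t/2| := by linarith
    _ = |t| := by rw [abs_div, abs_two]; ring

lemma le_expI' {t : ℝ} (ht : |t| ≤ π) :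
    |t| ≤ π / 2 * ‖Complex.exp (Complex.I * t) - 1‖ := by
  rw [norm_expI_sub_one']
  have h2 : |t/2| ≤ π / 2 := by rw [abs_div, abs_two]; linarith [abs_nonneg t]
  have hπ : (0:ℝ) < π := Real.pi_pos
  have ht2 : |t| = 2 * |t/2| := by rw [abs_div, abs_two]; ring
  rw [ht2]
  calc 2 * |t/2| ≤ 2 * (π/2 * |Real.sin (t/2)|) := by
        have h4 : |t/2| ≤ π/2 * |Real.sin (t/2)| := by
          calc |t/2| = π/2 * (2/π * |t/2|) := by field_simp
            _ ≤ π/2 * |Real.sin (t/2)| := by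
                apply mul_le_mul_of_nonneg_left (Real.mul_abs_le_abs_sin h2) (by positivity)
        linarith
    _ = π / 2 * (2 * |Real.sin (t/2)|) := by ring

end ScalarLemmas

section OperatorLemmas

lemma vn_isClosed (N : VonNeumannAlgebra H) : IsClosed (N : Set (H →L[ℂ] H)) := by
  have key : ∀ (S : Set (H →L[ℂ] H)), IsClosed (Set.centralizer S) := by
    intro S
    have : Set.centralizer S = ⋂ g ∈ S, {x : H →L[ℂ] H | g * x = x * g} := by
      ext z; simp [Set.mem_centralizer_iff]
    rw [this]
    exact isClosed_biInter fun g _ => isClosed_eq (continuous_mul_left g) (continuous_mul_right g)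
  have h : (N : Set (H →L[ℂ] H)) = Set.centralizer (Set.centralizer (N : Set (H →L[ℂ] H))) :=
    N.centralizer_centralizer.symm
  rw [h]
  exact key _

lemma cfcC_mem (N : VonNeumannAlgebra H) {x : H →L[ℂ] H} (hxN : x ∈ N) (f : ℂ → ℂ) :
    cfc f x ∈ N := by
  refine cfc_cases (· ∈ N) x f (zero_mem N) fun hf ha => ?_
  have : IsStarNormal x := ha
  rw [cfcHom_eq_of_isStarNormal]
  exact StarAlgebra.elemental.le_of_mem (vn_isClosed N) hxN (SetLike.coe_mem _)

lemma cfcR_mem (N : VonNeumannAlgebra H) {x : H →L[ℂ] H} (hx : IsSelfAdjoint x) (hxN : x ∈ N)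
    (f : ℝ → ℝ) : cfc f x ∈ N := by
  rw [cfc_real_eq_complex f hx]
  exact cfcC_mem N hxN _

lemma absOp_sa (x : H →L[ℂ] H) (hx : IsSelfAdjoint x) :
    absOp x = cfc (fun t : ℝ => |t|) x := by
  unfold absOp
  refine CFC.sqrt_unique ?_ (cfc_nonneg fun t _ => abs_nonneg t)
  calc cfc (fun t : ℝ => |t|) x * cfc (fun t : ℝ => |t|) x
      = cfc (fun t : ℝ => |t| * |t|) x := (cfc_mul _ _ x).symm
    _ = cfc (fun t : ℝ => t * t) x := cfc_congr fun t _ => abs_mul_abs_self t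
    _ = cfc (fun t : ℝ => t) x * cfc (fun t : ℝ => t) x := cfc_mul _ _ x
    _ = x * x := by rw [cfc_id' ℝ x]
    _ = star x * x := by rw [hx.star_eq]

lemma expI_sub_one_eq (x : H →L[ℂ] H) (hx : IsSelfAdjoint x) :
    cfc (fun z : ℂ => Complex.exp (Complex.I * z)) x - 1
      = cfc (fun z : ℂ => Complex.exp (Complex.I * z) - 1) x := by
  have := hx.isStarNormal
  rw [cfc_sub (fun z : ℂ => Complex.exp (Complex.I * z)) (fun _ : ℂ => 1) x
    (by fun_prop) (by fun_prop), cfc_const_one ℂ x]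

lemma absOp_expI (x : H →L[ℂ] H) (hx : IsSelfAdjoint x) :
    absOp (cfc (fun z : ℂ => Complex.exp (Complex.I * z) - 1) x)
      = cfc (fun t : ℝ => ‖Complex.exp (Complex.I * t) - 1‖) x := by
  have := hx.isStarNormal
  set g : ℂ → ℂ := fun z => Complex.exp (Complex.I * z) - 1 with hg
  set h : ℝ → ℝ := fun t => ‖Complex.exp (Complex.I * t) - 1‖ with hh
  have hcg : Continuous g :=
    (Complex.continuous_exp.comp (continuous_const.mul continuous_id)).sub continuous_const
  have hch : Continuous h :=
    ((Complex.continuous_exp.comp (continuous_const.mul Complex.continuous_ofReal)).sub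
      continuous_const).norm
  have key : star (cfc g x) * cfc g x = cfc (fun t : ℝ => h t * h t) x := by
    rw [← cfc_star g x, ← cfc_mul _ _ x (by fun_prop) (by fun_prop)]
    rw [cfc_real_eq_complex (fun t : ℝ => h t * h t) hx]
    apply cfc_congr
    intro z hz
    have hzre : (z.re : ℂ) = z := hx.spectrumRestricts.rightInvOn hz
    show star (g z) * g z = ((h z.re * h z.re : ℝ) : ℂ)
    have h1 : g z = g (z.re : ℂ) := by rw [hzre]
    have h2 : star (g (z.re : ℂ)) * g (z.re : ℂ)
        = ((‖g (z.re : ℂ)‖ * ‖g (z.re : ℂ)‖ : ℝ) : ℂ) := by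
      rw [Complex.star_def, mul_comm (starRingEnd ℂ _), Complex.mul_conj]
      rw [Complex.normSq_eq_norm_sq]
      push_cast
      ring
    rw [h1, h2]
  unfold absOp
  rw [key]
  exact CFC.sqrt_unique ((cfc_mul _ _ x (by fun_prop) (by fun_prop)).symm)
    (cfc_nonneg fun t _ => norm_nonneg _)

end OperatorLemmas

/-- For a self-adjoint `x ∈ N` with `‖x‖ ≤ π`, the element `e^{ix} - 1` lies in the
trace ideal `L¹_τ(N)` if and only if `x` does. -/
theorem expI_sub_one_memL1_iff (N : VonNeumannAlgebra H)
    (τ : (H →L[ℂ] H) → ℝ≥0∞) (hτ : IsFNSTrace N τ)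
    (x : H →L[ℂ] H) (hx : IsSelfAdjoint x) (hxN : x ∈ N) (hnorm : ‖x‖ ≤ Real.pi) :
    MemL1 N τ (cfc (fun z : ℂ => Complex.exp (Complex.I * z)) x - 1) ↔ MemL1 N τ x := by
  rcases subsingleton_or_nontrivial H with hH | hH
  · rw [Subsingleton.elim (cfc (fun z : ℂ => Complex.exp (Complex.I * z)) x - 1) x]
  have := hx.isStarNormal
  set h : ℝ → ℝ := fun t => ‖Complex.exp (Complex.I * t) - 1‖ with hh
  have hch : Continuous h :=
    ((Complex.continuous_exp.comp (continuous_const.mul Complex.continuous_ofReal)).sub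
      continuous_const).norm
  -- spectral bound
  have hspec : ∀ t ∈ spectrum ℝ x, |t| ≤ π := by
    intro t ht
    calc |t| = ‖t‖ := rfl
      _ ≤ ‖x‖ := spectrum.norm_le_norm_of_mem ht
      _ ≤ π := hnorm
  -- names
  set y : H →L[ℂ] H := cfc (fun z : ℂ => Complex.exp (Complex.I * z)) x - 1 with hy
  have hyeq : y = cfc (fun z : ℂ => Complex.exp (Complex.I * z) - 1) x := expI_sub_one_eq x hx
  have hyN : y ∈ N := by
    rw [hy]
    exact sub_mem (cfcC_mem N hxN _) (one_mem N)
  have hay : absOp y = cfc h x := by rw [hyeq]; exact absOp_expI x hx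
  have hax : absOp x = cfc (fun t : ℝ => |t|) x := absOp_sa x hx
  have hayN : absOp y ∈ N := by rw [hay]; exact cfcR_mem N hx hxN h
  have haxN : absOp x ∈ N := by rw [hax]; exact cfcR_mem N hx hxN _
  have hay0 : (0 : H →L[ℂ] H) ≤ absOp y := CFC.sqrt_nonneg _
  have hax0 : (0 : H →L[ℂ] H) ≤ absOp x := CFC.sqrt_nonneg _
  -- upper bound : absOp y ≤ absOp x
  have hle : absOp y ≤ absOp x := by
    rw [hay, hax]
    exact cfc_mono (fun t _ => expI_le' t) (hch.continuousOn) (continuous_abs.continuousOn)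
  -- lower bound : absOp x ≤ c • absOp y
  set c : ℝ≥0 := ⟨π / 2, by positivity⟩ with hc
  have hsmul : c • absOp y = cfc (fun t : ℝ => (π / 2) * h t) x := by
    rw [hay, NNReal.smul_def]
    have : (c : ℝ) = π / 2 := rfl
    rw [this, ← cfc_smul (π / 2 : ℝ) h x hch.continuousOn]
    simp [smul_eq_mul]
  have hge : absOp x ≤ c • absOp y := by
    rw [hax, hsmul]
    exact cfc_mono (fun t ht => le_expI' (hspec t ht)) (continuous_abs.continuousOn)
      ((continuous_const.mul hch).continuousOn)
  have hcayN : c • absOp y ∈ N := by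
    rw [NNReal.smul_def, ← IsScalarTower.algebraMap_smul ℂ (c : ℝ) (absOp y),
      Algebra.smul_def]
    exact mul_mem (N.algebraMap_mem _) hayN
  constructor
  · rintro ⟨-, hfin⟩
    refine ⟨hxN, ?_⟩
    have h1 : τ (absOp x) ≤ τ (c • absOp y) := hτ.monotone _ _ haxN hcayN hax0 hge
    have h2 : τ (c • absOp y) = c * τ (absOp y) := hτ.homogeneous c _ hayN hay0
    calc τ (absOp x) ≤ c * τ (absOp y) := h2 ▸ h1
      _ < ∞ := ENNReal.mul_lt_top ENNReal.coe_lt_top hfin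
  · rintro ⟨-, hfin⟩
    exact ⟨hyN, lt_of_le_of_lt (hτ.monotone _ _ hayN haxN hay0 hle) hfin⟩
end

section
/- Let N be a semifinite von Neumann algebra with faithful normal semifinite trace τ. If g ∈ N is invertible and g − 1 ∈ L¹_τ(N), then |g| = (g*g)^{1/2} is invertible and |g| − 1 ∈ L¹_τ(N). -/
set_option synthInstance.maxHeartbeats 1000000
set_option maxHeartbeats 1000000

open scoped ENNReal NNReal

variable {H : Type} [NormedAddCommGroup H] [InnerProductSpace ℂ H] [CompleteSpace H]

namespace AbsOpAux

/-! ### Real function lemmas -/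

/-- cutoff function -/
noncomputable def phig (m s : ℝ) : ℝ := max 0 (min 1 (m * s - 1))

/-- approximation to `max s 0` -/
noncomputable def Fg (m s : ℝ) : ℝ := phig m s * (s * phig m s)

lemma phig_cont (m : ℝ) : Continuous (phig m) := by
  unfold phig; fun_prop

lemma Fg_cont (m : ℝ) : Continuous (Fg m) := by
  unfold Fg; have := phig_cont m; fun_prop

lemma phig_nonneg (m s : ℝ) : 0 ≤ phig m s := le_max_left _ _

lemma phig_le_one (m s : ℝ) : phig m s ≤ 1 :=
  max_le zero_le_one (min_le_left _ _)

lemma phig_eq_zero {m s : ℝ} (h : m * s ≤ 1) : phig m s = 0 := by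
  have h1 : min 1 (m * s - 1) ≤ 0 := le_trans (min_le_right _ _) (by linarith)
  simp only [phig]
  exact max_eq_left h1

lemma phig_mono {m₁ m₂ s : ℝ} (hs : 0 ≤ s) (h : m₁ ≤ m₂) : phig m₁ s ≤ phig m₂ s := by
  have : m₁ * s ≤ m₂ * s := mul_le_mul_of_nonneg_right h hs
  exact max_le_max le_rfl (min_le_min le_rfl (by linarith))

lemma Fg_nonneg (m s : ℝ) (hm : 0 < m) : 0 ≤ Fg m s := by
  rcases le_or_gt (m * s) 1 with h | h
  · simp [Fg, phig_eq_zero h]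
  · have hs : 0 < s := by nlinarith
    have h1 := phig_nonneg m s
    exact mul_nonneg h1 (mul_nonneg hs.le h1)

lemma Fg_le (m s : ℝ) (hm : 0 < m) : Fg m s ≤ max s 0 := by
  rcases le_or_gt (m * s) 1 with h | h
  · simp [Fg, phig_eq_zero h]
  · have hs : 0 < s := by nlinarith
    have h1 := phig_nonneg m s
    have h2 := phig_le_one m s
    have hφφ : phig m s * phig m s ≤ 1 := mul_le_one₀ h2 h1 h2
    have : Fg m s ≤ s := by unfold Fg; nlinarith
    exact le_trans this (le_max_left _ _)

lemma Fg_mono_m {m₁ m₂ : ℝ} (s : ℝ) (hm : 0 < m₁) (h : m₁ ≤ m₂) : Fg m₁ s ≤ Fg m₂ s := by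
  rcases le_or_gt s 0 with hs | hs
  · have e1 : phig m₁ s = 0 := phig_eq_zero (by nlinarith)
    have e2 : phig m₂ s = 0 := phig_eq_zero (by nlinarith)
    simp [Fg, e1, e2]
  · have h1 := phig_nonneg m₁ s
    have h2 := phig_mono hs.le h
    have h3 := phig_nonneg m₂ s
    have h4 : phig m₁ s * phig m₁ s ≤ phig m₂ s * phig m₂ s := mul_le_mul h2 h2 h1 h3
    unfold Fg; nlinarith

lemma Fg_approx (m s : ℝ) (hm : 0 < m) : max s 0 - Fg m s ≤ 2 / m := by
  rcases le_or_gt (m * s) 1 with h | h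
  · have e1 : phig m s = 0 := phig_eq_zero h
    have hs : s ≤ 1 / m := by rw [le_div_iff₀ hm]; linarith
    have h2 : (1:ℝ)/m ≤ 2/m := by gcongr; norm_num
    have e2 : Fg m s = 0 := by simp [Fg, e1]
    rw [e2, sub_zero]
    exact max_le (by linarith) (by positivity)
  · have hs : 0 < s := by nlinarith
    have hmax : max s 0 = s := max_eq_left hs.le
    rcases le_or_gt 2 (m * s) with h2 | h2
    · have e1 : phig m s = 1 := by
        have h3 : (1:ℝ) ≤ m * s - 1 := by linarith
        simp only [phig, min_eq_left h3]
        exact max_eq_right zero_le_one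
      simp only [Fg, e1, hmax]
      have : 0 ≤ 2 / m := by positivity
      linarith
    · have hs2 : s ≤ 2 / m := by rw [le_div_iff₀ hm]; linarith
      have h1 := phig_nonneg m s
      have h2' := phig_le_one m s
      have : 0 ≤ Fg m s := Fg_nonneg m s hm
      simp only [hmax]
      linarith

lemma Fg_low (m s : ℝ) (hm : 0 < m) :
    (1 / m) * (phig m s * phig m s) ≤ Fg m s := by
  rcases le_or_gt (m * s) 1 with h | h
  · simp [Fg, phig_eq_zero h]
  · have hs : 1 / m < s := by rw [div_lt_iff₀ hm]; linarith
    have h1 := phig_nonneg m s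
    unfold Fg; nlinarith

lemma abs_sqrt_sub_one_le {t : ℝ} (ht : 0 ≤ t) : |Real.sqrt t - 1| ≤ |t - 1| := by
  have hs := Real.sqrt_nonneg t
  have hss : Real.sqrt t * Real.sqrt t = t := Real.mul_self_sqrt ht
  rcases le_or_gt t 1 with h | h
  · have h1 : Real.sqrt t ≤ 1 := by nlinarith
    rw [abs_of_nonpos (by linarith), abs_of_nonpos (by linarith)]
    nlinarith
  · have h1 : 1 ≤ Real.sqrt t := by nlinarith
    rw [abs_of_nonneg (by linarith), abs_of_nonneg (by linarith)]
    nlinarith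

lemma abs_eq_maxsum (t : ℝ) : |t - 1| = max (t - 1) 0 + max (1 - t) 0 := by
  rcases le_total t 1 with h | h
  · rw [abs_of_nonpos (by linarith), max_eq_right (by linarith), max_eq_left (by linarith)]
    ring
  · rw [abs_of_nonneg (by linarith), max_eq_left (by linarith), max_eq_right (by linarith)]
    ring

/-! ### Operator lemmas -/

lemma vN_cfc_mem (N : VonNeumannAlgebra H) {x : H →L[ℂ] H}
    (hsa : IsSelfAdjoint x) (hx : x ∈ N) (f : ℝ → ℝ) (hf : Continuous f) :
    cfc f x ∈ N := by
  have hcfc : cfc f x = cfcHom (R := ℝ) hsa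
      ⟨(spectrum ℝ x).restrict f, hf.continuousOn.restrict⟩ :=
    cfc_apply f x hsa hf.continuousOn
  have key : ∀ y : H →L[ℂ] H, x * y = y * x → (cfc f x) * y = y * (cfc f x) := by
    intro y hxy
    let SA : Subalgebra ℝ C(spectrum ℝ x, ℝ) :=
    { carrier := {g | (cfcHom (R := ℝ) hsa g) * y = y * (cfcHom (R := ℝ) hsa g)}
      mul_mem' := by
        intro p q hp hq
        simp only [Set.mem_setOf_eq, map_mul] at *
        rw [mul_assoc, hq, ← mul_assoc, hp, mul_assoc]
      add_mem' := by
        intro p q hp hq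
        simp only [Set.mem_setOf_eq, map_add] at *
        rw [add_mul, mul_add, hp, hq]
      one_mem' := by
        simp only [Set.mem_setOf_eq, map_one, one_mul, mul_one]
      zero_mem' := by
        simp only [Set.mem_setOf_eq, map_zero, zero_mul, mul_zero]
      algebraMap_mem' := by
        intro r
        simp only [Set.mem_setOf_eq, AlgHomClass.commutes]
        exact (Algebra.commute_algebraMap_left r y).eq }
    have hclosed : IsClosed (SA : Set C(spectrum ℝ x, ℝ)) := by
      have : IsClosed {z : H →L[ℂ] H | z * y = y * z} :=
        isClosed_eq (continuous_id.mul continuous_const) (continuous_const.mul continuous_id)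
      exact this.preimage (cfcHom_isClosedEmbedding (R := ℝ) hsa).continuous
    have hsep : SA.SeparatesPoints := by
      intro p q hpq
      refine ⟨_, ⟨(ContinuousMap.id ℝ).restrict (spectrum ℝ x), ?_, rfl⟩, ?_⟩
      · show cfcHom (R := ℝ) hsa _ * y = y * cfcHom (R := ℝ) hsa _
        rw [cfcHom_id hsa]
        exact hxy
      · simpa [ContinuousMap.restrict_apply] using fun h => hpq (Subtype.ext h)
    have htop : SA = ⊤ := by
      have h1 := ContinuousMap.subalgebra_topologicalClosure_eq_top_of_separatesPoints SA hsep
      have h2 : SA.topologicalClosure ≤ SA :=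
        Subalgebra.topologicalClosure_minimal le_rfl hclosed
      exact top_le_iff.mp (h1 ▸ h2)
    have hmem : (⟨(spectrum ℝ x).restrict f, hf.continuousOn.restrict⟩ :
        C(spectrum ℝ x, ℝ)) ∈ SA := by
      rw [htop]; trivial
    rw [hcfc]
    exact hmem
  rw [← SetLike.mem_coe, ← N.centralizer_centralizer]
  intro y hy
  exact (key y ((Set.mem_centralizer_iff.mp hy) x hx)).symm

lemma sqrt_eq_cfc_real {x : H →L[ℂ] H} (h : 0 ≤ x) : CFC.sqrt x = cfc Real.sqrt x := by
  have h1 : cfc Real.sqrt x * cfc Real.sqrt x = x := by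
    rw [← cfc_mul Real.sqrt Real.sqrt x]
    calc cfc (fun s => Real.sqrt s * Real.sqrt s) x
        = cfc (fun s : ℝ => s) x := cfc_congr fun s hs => Real.mul_self_sqrt
          (spectrum_nonneg_of_nonneg h hs)
      _ = x := cfc_id' ℝ x (IsSelfAdjoint.of_nonneg h)
  exact CFC.sqrt_unique h1 (cfc_nonneg fun s _ => Real.sqrt_nonneg s)

lemma vN_smul_mem (N : VonNeumannAlgebra H) {x : H →L[ℂ] H} (hx : x ∈ N) (r : ℝ) :
    r • x ∈ N := by
  have h1 : ((r : ℂ) • x) ∈ N.toStarSubalgebra :=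
    SMulMemClass.smul_mem (r : ℂ) (VonNeumannAlgebra.mem_carrier.mpr hx)
  have h2 : (r : ℂ) • x = r • x := by
    rw [← algebraMap_smul ℂ r x]; norm_num
  rw [← h2]
  exact VonNeumannAlgebra.mem_carrier.mp h1

/-- `a + a* ≤ η•1 + η⁻¹ (a* a)` -/
lemma re_le_smul_add {a : H →L[ℂ] H} {η : ℝ} (hη : 0 < η) :
    a + star a ≤ η • (1 : H →L[ℂ] H) + η⁻¹ • (star a * a) := by
  set q := Real.sqrt η with hqd
  set r := Real.sqrt η⁻¹ with hrd
  have hq : q * q = η := Real.mul_self_sqrt hη.le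
  have hr : r * r = η⁻¹ := Real.mul_self_sqrt (by positivity)
  have hqr : q * r = 1 := by
    rw [hqd, hrd, Real.sqrt_inv]
    exact mul_inv_cancel₀ (ne_of_gt (Real.sqrt_pos.mpr hη))
  have h0 : 0 ≤ star (q • (1 : H →L[ℂ] H) - r • a) * (q • (1 : H →L[ℂ] H) - r • a) :=
    star_mul_self_nonneg _
  have hexp : star (q • (1 : H →L[ℂ] H) - r • a) * (q • (1 : H →L[ℂ] H) - r • a)
      = (η • (1 : H →L[ℂ] H) + η⁻¹ • (star a * a)) - (a + star a) := by
    have hstar : star (q • (1 : H →L[ℂ] H) - r • a) = q • (1 : H →L[ℂ] H) - r • star a := by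
      simp [star_sub, star_smul]
    rw [hstar, sub_mul, mul_sub, mul_sub]
    simp only [smul_mul_assoc, mul_smul_comm, smul_smul, one_mul, mul_one, hq, hqr,
      mul_comm r q, hr, one_smul]
    abel
  rw [hexp] at h0
  exact sub_nonneg.mp h0

lemma tau_sm {N : VonNeumannAlgebra H} {τ : (H →L[ℂ] H) → ℝ≥0∞} (hτ : IsFNSTrace N τ)
    {w z : H →L[ℂ] H} (hw : w ∈ N) (hz : z ∈ N) (h : w * star w ≤ z) :
    τ (star w * w) ≤ τ z := by
  rw [hτ.tracial w hw]
  exact hτ.monotone _ _ (mul_mem hw (star_mem hw)) hz (mul_star_self_nonneg w) h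

end AbsOpAux

namespace AbsOpAux
variable {H : Type} [NormedAddCommGroup H] [InnerProductSpace ℂ H] [CompleteSpace H]

lemma PP_nonneg {P : H →L[ℂ] H} (hPsa : IsSelfAdjoint P) : (0:H →L[ℂ] H) ≤ P * P := by
  have := star_mul_self_nonneg P
  rwa [hPsa.star_eq] at this

/-- Finiteness of the trace of the approximate support projection. -/
lemma tau_Psq_fin {N : VonNeumannAlgebra H} {τ : (H →L[ℂ] H) → ℝ≥0∞} (hτ : IsFNSTrace N τ)
    {a P h : H →L[ℂ] H} {δ : ℝ} (hδ : 0 < δ)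
    (haN : a ∈ N) (hPN : P ∈ N) (hPsa : IsSelfAdjoint P) (hP1 : P * P ≤ 1)
    (hlow : δ • (P * P) ≤ h)
    (hhle : h ≤ P * (a + star a) * P + P * (star a * a) * P)
    (hcfin : τ (star a * a) < ∞) :
    τ (P * P) < ∞ := by
  set η := δ / 2 with hηd
  have hη : 0 < η := by positivity
  have key := re_le_smul_add (a := a) hη
  have hconj : P * (a + star a) * P ≤ P * (η • (1:H →L[ℂ] H) + η⁻¹ • (star a * a)) * P := by
    have := star_left_conjugate_le_conjugate key P
    rwa [hPsa.star_eq] at this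
  have hexp : P * (η • (1:H →L[ℂ] H) + η⁻¹ • (star a * a)) * P
      = η • (P * P) + η⁻¹ • (P * (star a * a) * P) := by
    simp only [mul_add, add_mul, mul_smul_comm, smul_mul_assoc, mul_one, one_mul]
  have h1 : δ • (P * P) ≤ η • (P * P) + (η⁻¹ • (P * (star a * a) * P)
      + P * (star a * a) * P) := by
    calc δ • (P * P) ≤ h := hlow
      _ ≤ P * (a + star a) * P + P * (star a * a) * P := hhle
      _ ≤ (η • (P * P) + η⁻¹ • (P * (star a * a) * P)) + P * (star a * a) * P := by
          refine add_le_add_left ?_ _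
          rw [← hexp]; exact hconj
      _ = η • (P * P) + (η⁻¹ • (P * (star a * a) * P) + P * (star a * a) * P) := by abel
  have h2 : η • (P * P) ≤ η⁻¹ • (P * (star a * a) * P) + P * (star a * a) * P := by
    have h3 := sub_le_sub_right h1 (η • (P * P))
    have h4 : δ • (P * P) - η • (P * P) = η • (P * P) := by
      rw [← sub_smul]
      congr 1
      rw [hηd]; ring
    rw [h4] at h3
    calc η • (P * P) ≤ η • (P * P) + (η⁻¹ • (P * (star a * a) * P)
          + P * (star a * a) * P) - η • (P * P) := h3
      _ = η⁻¹ • (P * (star a * a) * P) + P * (star a * a) * P := by abel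
  set r := η⁻¹ * (η⁻¹ + 1) with hrd
  have h5 : P * P ≤ r • (P * (star a * a) * P) := by
    have h6 : P * P = η⁻¹ • (η • (P * P)) := by
      rw [smul_smul, inv_mul_cancel₀ (ne_of_gt hη), one_smul]
    rw [h6, hrd]
    calc η⁻¹ • (η • (P * P))
        ≤ η⁻¹ • (η⁻¹ • (P * (star a * a) * P) + P * (star a * a) * P) :=
          smul_le_smul_of_nonneg_left h2 (by positivity)
      _ = (η⁻¹ * (η⁻¹ + 1)) • (P * (star a * a) * P) := by
          rw [smul_add, smul_smul, mul_add, mul_one, add_smul]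
  have hPcPN : P * (star a * a) * P ∈ N :=
    mul_mem (mul_mem hPN (mul_mem (star_mem haN) haN)) hPN
  have hPcP_le : τ (P * (star a * a) * P) ≤ τ (star a * a) := by
    have he : star (a * P) * (a * P) = P * (star a * a) * P := by
      rw [star_mul, hPsa.star_eq]; noncomm_ring
    have hle2 : (a * P) * star (a * P) ≤ a * star a := by
      have := star_right_conjugate_le_conjugate hP1 a
      rw [mul_one] at this
      calc (a * P) * star (a * P) = a * (P * P) * star a := by
            rw [star_mul, hPsa.star_eq]; noncomm_ring
        _ ≤ a * star a := this
    have := tau_sm hτ (mul_mem haN hPN) (mul_mem haN (star_mem haN)) hle2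
    rw [he] at this
    rw [hτ.tracial a haN]
    exact this
  have hPP_N : P * P ∈ N := mul_mem hPN hPN
  have hr0 : 0 ≤ r := by rw [hrd]; positivity
  have hPcP0 : 0 ≤ P * (star a * a) * P := by
    have he : star (a * P) * (a * P) = P * (star a * a) * P := by
      rw [star_mul, hPsa.star_eq]; noncomm_ring
    rw [← he]; exact star_mul_self_nonneg _
  have hτle : τ (P * P) ≤ τ (r • (P * (star a * a) * P)) :=
    hτ.monotone _ _ hPP_N (vN_smul_mem N hPcPN r) (PP_nonneg hPsa) h5
  have hτsm : τ (r • (P * (star a * a) * P))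
      = (r.toNNReal : ℝ≥0∞) * τ (P * (star a * a) * P) := by
    rw [← hτ.homogeneous r.toNNReal _ hPcPN hPcP0]
    congr 1
    rw [NNReal.smul_def, Real.coe_toNNReal r hr0]
  calc τ (P * P) ≤ (r.toNNReal : ℝ≥0∞) * τ (P * (star a * a) * P) := hτle.trans hτsm.le
    _ ≤ (r.toNNReal : ℝ≥0∞) * τ (star a * a) := by
        exact mul_le_mul_right hPcP_le _
    _ < ∞ := ENNReal.mul_lt_top ENNReal.coe_lt_top hcfin

end AbsOpAux

namespace AbsOpAux
variable {H : Type} [NormedAddCommGroup H] [InnerProductSpace ℂ H] [CompleteSpace H]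

/-- The key estimate: `τ h ≤ 2 τ(|a|) + τ(a* a)` for
`0 ≤ h ≤ P (a + a*) P + P a* a P` with `P` a selfadjoint contraction with
finite-trace square. -/
lemma tau_est {N : VonNeumannAlgebra H} {τ : (H →L[ℂ] H) → ℝ≥0∞} (hτ : IsFNSTrace N τ)
    {a P h : H →L[ℂ] H}
    (haN : a ∈ N) (hPN : P ∈ N) (hPsa : IsSelfAdjoint P) (hP1 : P * P ≤ 1)
    (hhN : h ∈ N) (hh0 : 0 ≤ h)
    (hhle : h ≤ P * (a + star a) * P + P * (star a * a) * P)
    (hPfin : τ (P * P) < ∞) (hcfin : τ (star a * a) < ∞)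
    (hbfin : τ (cfc Real.sqrt (star a * a)) < ∞) :
    τ h ≤ τ (cfc Real.sqrt (star a * a)) + τ (cfc Real.sqrt (star a * a))
      + τ (star a * a) := by
  have hc0 : (0:H →L[ℂ] H) ≤ star a * a := star_mul_self_nonneg a
  have hcsa : IsSelfAdjoint (star a * a) := .of_nonneg hc0
  have hcN : star a * a ∈ N := mul_mem (star_mem haN) haN
  have hspec : ∀ s ∈ spectrum ℝ (star a * a), 0 ≤ s :=
    fun s hs => spectrum_nonneg_of_nonneg hc0 hs
  set b := cfc Real.sqrt (star a * a) with hbdef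
  have hbN : b ∈ N := vN_cfc_mem N hcsa hcN _ Real.continuous_sqrt
  have hb0 : (0:H →L[ℂ] H) ≤ b := cfc_nonneg fun s _ => Real.sqrt_nonneg s
  -- the step estimate, for every `ε > 0`
  have step : ∀ ε : ℝ, 0 < ε →
      τ h ≤ (τ b + τ b + τ (star a * a)) + (ε.toNNReal : ℝ≥0∞) * τ (P * P) := by
    intro ε hε
    have contf1 : Continuous (fun s : ℝ => Real.sqrt (Real.sqrt s + ε)) := by fun_prop
    have contf2 : Continuous (fun s : ℝ => (Real.sqrt s + ε)⁻¹) := by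
      have hne : ∀ s : ℝ, Real.sqrt s + ε ≠ 0 := fun s => by positivity
      exact (Real.continuous_sqrt.add continuous_const).inv₀ hne
    set B := cfc (fun s : ℝ => Real.sqrt (Real.sqrt s + ε)) (star a * a) with hBdef
    set V := cfc (fun s : ℝ => (Real.sqrt s + ε)⁻¹) (star a * a) with hVdef
    have hBN : B ∈ N := vN_cfc_mem N hcsa hcN _ contf1
    have hVN : V ∈ N := vN_cfc_mem N hcsa hcN _ contf2
    have hBsa : IsSelfAdjoint B := cfc_predicate _ _
    have hVsa : IsSelfAdjoint V := cfc_predicate _ _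
    have hBB : B * B = cfc (fun s : ℝ => Real.sqrt s + ε) (star a * a) := by
      rw [← cfc_mul _ _ (star a * a) contf1.continuousOn contf1.continuousOn]
      exact cfc_congr fun s _ => Real.mul_self_sqrt (by positivity)
    have hVBB : V * (B * B) = 1 := by
      rw [hBB, ← cfc_mul _ (fun s : ℝ => Real.sqrt s + ε) (star a * a) contf2.continuousOn
        (Real.continuous_sqrt.add continuous_const).continuousOn]
      calc cfc (fun s : ℝ => (Real.sqrt s + ε)⁻¹ * (Real.sqrt s + ε)) (star a * a)
          = cfc (fun _ : ℝ => (1:ℝ)) (star a * a) :=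
            cfc_congr fun s _ => inv_mul_cancel₀ (by positivity)
        _ = 1 := cfc_const_one ℝ (star a * a) hcsa
    obtain ⟨u, hud⟩ : ∃ u : H →L[ℂ] H, u = a * V := ⟨_, rfl⟩
    have huN : u ∈ N := hud ▸ mul_mem haN hVN
    have hsu : star u = V * star a := by rw [hud, star_mul a V, hVsa.star_eq]
    have hua : u * (B * B) = a := by rw [hud, mul_assoc, hVBB, mul_one]
    have hBBsa : star (B * B) = B * B := by rw [star_mul B B, hBsa.star_eq]
    have hstara : (B * B) * star u = star a := by
      conv_rhs => rw [← hua]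
      rw [star_mul u (B * B), hBBsa]
    -- key inequality `a + a* ≤ B² + a u*`
    have key1 : a + star a ≤ (B * B) + a * star u := by
      have h0 := star_mul_self_nonneg (B - B * star u)
      have hz : star (B - B * star u) = B - u * B := by
        rw [star_sub, star_mul B (star u), star_star, hBsa.star_eq]
      have hexp : star (B - B * star u) * (B - B * star u)
          = ((B * B) + a * star u) - (a + star a) := by
        rw [hz]
        have e1 : (B - u * B) * (B - B * star u)
            = B * B - (B * B) * star u - u * (B * B) + (u * (B * B)) * star u := by
          noncomm_ring
        rw [e1, hstara, hua]
        abel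
      rw [hexp] at h0
      exact sub_nonneg.mp h0
    -- operator chain for `S2 := P (a u*) P`
    have hsuBstar : star (u * B) = B * star u := by rw [star_mul u B, hBsa.star_eq]
    have hS2_eq : star (B * star u * P) * (B * star u * P) = P * (a * star u) * P := by
      have h1 : star (B * star u * P) = P * (u * B) := by
        rw [star_mul (B * star u) P, star_mul B (star u), star_star, hPsa.star_eq,
          hBsa.star_eq]
      rw [h1]
      calc P * (u * B) * (B * star u * P)
          = P * ((u * (B * B)) * star u) * P := by noncomm_ring
        _ = P * (a * star u) * P := by rw [hua]
    have hS2_le : (B * star u * P) * star (B * star u * P) ≤ b := by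
      have h1 : star (B * star u * P) = P * (u * B) := by
        rw [star_mul (B * star u) P, star_mul B (star u), star_star, hPsa.star_eq,
          hBsa.star_eq]
      have h2 : (B * star u * P) * (P * (u * B)) = (B * star u) * (P * P) * (u * B) := by
        noncomm_ring
      have h3 : (B * star u) * (P * P) * (u * B) ≤ (B * star u) * (u * B) := by
        have := star_left_conjugate_le_conjugate hP1 (u * B)
        rw [hsuBstar, mul_one] at this
        exact this
      have h4 : (B * star u) * (u * B) = B * (star u * u) * B := by noncomm_ring
      have h5 : star u * u = V * ((star a * a) * V) := by
        rw [hsu, hud]; noncomm_ring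
      have h6 : B * (V * ((star a * a) * V)) * B ≤ b := by
        have hcV : (star a * a) * V = cfc (fun s : ℝ => s * (Real.sqrt s + ε)⁻¹)
            (star a * a) := by
          calc (star a * a) * V = cfc (fun s : ℝ => s) (star a * a) * V := by
                rw [cfc_id' ℝ (star a * a) hcsa]
            _ = cfc (fun s : ℝ => s * (Real.sqrt s + ε)⁻¹) (star a * a) :=
                (cfc_mul _ _ (star a * a) (continuous_id.continuousOn)
                  contf2.continuousOn).symm
        have contf3 : Continuous (fun s : ℝ => s * (Real.sqrt s + ε)⁻¹) :=
          continuous_id.mul contf2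
        have contmid : Continuous
            (fun s : ℝ => (Real.sqrt s + ε)⁻¹ * (s * (Real.sqrt s + ε)⁻¹)) :=
          contf2.mul contf3
        have hVcV : V * ((star a * a) * V)
            = cfc (fun s : ℝ => (Real.sqrt s + ε)⁻¹ * (s * (Real.sqrt s + ε)⁻¹))
              (star a * a) := by
          rw [hcV, hVdef,
            ← cfc_mul _ _ (star a * a) contf2.continuousOn contf3.continuousOn]
        have hfin : B * (V * ((star a * a) * V)) * B
            = cfc (fun s : ℝ => Real.sqrt (Real.sqrt s + ε)
                * (((Real.sqrt s + ε)⁻¹ * (s * (Real.sqrt s + ε)⁻¹))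
                  * Real.sqrt (Real.sqrt s + ε))) (star a * a) := by
          rw [hVcV, hBdef, mul_assoc,
            ← cfc_mul _ _ (star a * a) contmid.continuousOn contf1.continuousOn,
            ← cfc_mul _ (fun s : ℝ => ((Real.sqrt s + ε)⁻¹ * (s * (Real.sqrt s + ε)⁻¹))
              * Real.sqrt (Real.sqrt s + ε)) (star a * a) contf1.continuousOn
              (contmid.mul contf1).continuousOn]
        rw [hfin, hbdef]
        refine cfc_mono (fun s hs => ?_)
          ((contf1.mul (contmid.mul contf1)).continuousOn)
          Real.continuous_sqrt.continuousOn
        have hs0 : 0 ≤ s := hspec s hs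
        set w := Real.sqrt s + ε with hwd
        have hw : 0 < w := by positivity
        have hww : Real.sqrt w * Real.sqrt w = w := Real.mul_self_sqrt hw.le
        have hsq : Real.sqrt s * Real.sqrt s = s := Real.mul_self_sqrt hs0
        have e : Real.sqrt w * ((w⁻¹ * (s * w⁻¹)) * Real.sqrt w) = s / w := by
          rw [show Real.sqrt w * ((w⁻¹ * (s * w⁻¹)) * Real.sqrt w)
            = (w⁻¹ * (s * w⁻¹)) * (Real.sqrt w * Real.sqrt w) by ring, hww]
          field_simp
        rw [e, div_le_iff₀ hw]
        nlinarith [Real.sqrt_nonneg s, hsq, hε.le]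
      calc (B * star u * P) * star (B * star u * P)
          = (B * star u) * (P * P) * (u * B) := by rw [h1]; exact h2
        _ ≤ (B * star u) * (u * B) := h3
        _ = B * (star u * u) * B := h4
        _ = B * (V * ((star a * a) * V)) * B := by rw [h5]
        _ ≤ b := h6
    have hS2 : τ (P * (a * star u) * P) ≤ τ b := by
      rw [← hS2_eq]
      exact tau_sm hτ (mul_mem (mul_mem hBN (star_mem huN)) hPN) hbN hS2_le
    -- `S1 := P B² P = P b P + ε (P P)`
    have hBBb : B * B = b + ε • (1 : H →L[ℂ] H) := by
      rw [hBB]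
      have := cfc_add (a := star a * a) Real.sqrt (fun _ : ℝ => ε)
        Real.continuous_sqrt.continuousOn continuousOn_const
      rw [show (fun s : ℝ => Real.sqrt s + ε) = fun s : ℝ => Real.sqrt s + (fun _ : ℝ => ε) s
        from rfl, this, hbdef, cfc_const ε (star a * a) hcsa,
        Algebra.algebraMap_eq_smul_one]
    have hS1eq : P * (B * B) * P = P * b * P + ε • (P * P) := by
      rw [hBBb]
      simp only [mul_add, add_mul, mul_smul_comm, smul_mul_assoc, mul_one, one_mul]
    -- `τ (P b P) ≤ τ b`
    set bh := cfc (fun s : ℝ => Real.sqrt (Real.sqrt s)) (star a * a) with hbhdef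
    have hbhN : bh ∈ N := vN_cfc_mem N hcsa hcN _ (by fun_prop)
    have hbhsa : IsSelfAdjoint bh := cfc_predicate _ _
    have hbhbh : bh * bh = b := by
      rw [hbhdef, hbdef, ← cfc_mul _ _ (star a * a) (by fun_prop) (by fun_prop)]
      exact cfc_congr fun s _ => Real.mul_self_sqrt (Real.sqrt_nonneg s)
    have hPbP_eq : star (bh * P) * (bh * P) = P * b * P := by
      rw [star_mul bh P, hPsa.star_eq, hbhsa.star_eq]
      calc P * bh * (bh * P) = P * (bh * bh) * P := by noncomm_ring
        _ = P * b * P := by rw [hbhbh]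
    have hPbP_le : (bh * P) * star (bh * P) ≤ b := by
      rw [star_mul bh P, hPsa.star_eq, hbhsa.star_eq]
      have h2 : bh * P * (P * bh) = bh * (P * P) * bh := by noncomm_ring
      rw [h2]
      have := star_left_conjugate_le_conjugate hP1 bh
      rw [hbhsa.star_eq, mul_one, hbhbh] at this
      exact this
    have hS1b : τ (P * b * P) ≤ τ b := by
      rw [← hPbP_eq]
      exact tau_sm hτ (mul_mem hbhN hPN) hbN hPbP_le
    -- `S3 := P (a* a) P`
    have hS3_eq : star (a * P) * (a * P) = P * (star a * a) * P := by
      rw [star_mul a P, hPsa.star_eq]; noncomm_ring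
    have hS3_le : (a * P) * star (a * P) ≤ a * star a := by
      have := star_right_conjugate_le_conjugate hP1 a
      rw [mul_one] at this
      calc (a * P) * star (a * P) = a * (P * P) * star a := by
            rw [star_mul a P, hPsa.star_eq]; noncomm_ring
        _ ≤ a * star a := this
    have hS3 : τ (P * (star a * a) * P) ≤ τ (star a * a) := by
      rw [← hS3_eq, hτ.tracial a haN]
      exact tau_sm hτ (mul_mem haN hPN) (mul_mem haN (star_mem haN)) hS3_le
    -- assemble
    have hPP0 : (0:H →L[ℂ] H) ≤ P * P := PP_nonneg hPsa
    have hT1 : (0:H →L[ℂ] H) ≤ P * b * P := by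
      rw [← hPbP_eq]; exact star_mul_self_nonneg _
    have hT2 : (0:H →L[ℂ] H) ≤ ε • (P * P) := smul_nonneg hε.le hPP0
    have hT3 : (0:H →L[ℂ] H) ≤ P * (a * star u) * P := by
      rw [← hS2_eq]; exact star_mul_self_nonneg _
    have hT4 : (0:H →L[ℂ] H) ≤ P * (star a * a) * P := by
      rw [← hS3_eq]; exact star_mul_self_nonneg _
    have hT1N : P * b * P ∈ N := mul_mem (mul_mem hPN hbN) hPN
    have hT2N : ε • (P * P) ∈ N := vN_smul_mem N (mul_mem hPN hPN) ε
    have hT3N : P * (a * star u) * P ∈ N :=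
      mul_mem (mul_mem hPN (mul_mem haN (star_mem huN))) hPN
    have hT4N : P * (star a * a) * P ∈ N := mul_mem (mul_mem hPN hcN) hPN
    have hsum : h ≤ ((P * b * P + ε • (P * P)) + P * (a * star u) * P)
        + P * (star a * a) * P := by
      refine le_trans hhle ?_
      have hconj : P * (a + star a) * P ≤ P * ((B * B) + a * star u) * P := by
        have := star_left_conjugate_le_conjugate key1 P
        rwa [hPsa.star_eq] at this
      refine add_le_add_left ?_ _
      calc P * (a + star a) * P ≤ P * ((B * B) + a * star u) * P := hconj
        _ = P * (B * B) * P + P * (a * star u) * P := by noncomm_ring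
        _ = (P * b * P + ε • (P * P)) + P * (a * star u) * P := by rw [hS1eq]
    have hτsum : τ h ≤ τ (((P * b * P + ε • (P * P)) + P * (a * star u) * P)
        + P * (star a * a) * P) := by
      refine hτ.monotone _ _ hhN ?_ hh0 hsum
      exact add_mem (add_mem (add_mem hT1N hT2N) hT3N) hT4N
    have hsplit : τ (((P * b * P + ε • (P * P)) + P * (a * star u) * P)
        + P * (star a * a) * P)
        = ((τ (P * b * P) + τ (ε • (P * P))) + τ (P * (a * star u) * P))
          + τ (P * (star a * a) * P) := by
      rw [hτ.additive _ _ (add_mem (add_mem hT1N hT2N) hT3N) hT4N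
        (add_nonneg (add_nonneg hT1 hT2) hT3) hT4]
      rw [hτ.additive _ _ (add_mem hT1N hT2N) hT3N (add_nonneg hT1 hT2) hT3]
      rw [hτ.additive _ _ hT1N hT2N hT1 hT2]
    have hτeps : τ (ε • (P * P)) = (ε.toNNReal : ℝ≥0∞) * τ (P * P) := by
      rw [← hτ.homogeneous ε.toNNReal _ (mul_mem hPN hPN) hPP0]
      congr 1
      rw [NNReal.smul_def, Real.coe_toNNReal ε hε.le]
    calc τ h ≤ ((τ (P * b * P) + τ (ε • (P * P))) + τ (P * (a * star u) * P))
          + τ (P * (star a * a) * P) := hτsum.trans hsplit.le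
      _ ≤ ((τ b + (ε.toNNReal : ℝ≥0∞) * τ (P * P)) + τ b) + τ (star a * a) := by
          gcongr
          exact hτeps.le
      _ = (τ b + τ b + τ (star a * a)) + (ε.toNNReal : ℝ≥0∞) * τ (P * P) := by ring
  -- now let `ε → 0`
  apply ENNReal.le_of_forall_pos_le_add
  intro ρ hρ _
  set γ := (τ (P * P)).toNNReal with hγd
  have hγ : τ (P * P) = (γ : ℝ≥0∞) := (ENNReal.coe_toNNReal hPfin.ne).symm
  set ε : ℝ := ((ρ / (γ + 1) : ℝ≥0) : ℝ) with hεd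
  have hε : 0 < ε := by
    have : (0:ℝ≥0) < ρ / (γ + 1) := by positivity
    exact_mod_cast this
  have h1 := step ε hε
  have h2 : (ε.toNNReal : ℝ≥0∞) * τ (P * P) ≤ (ρ : ℝ≥0∞) := by
    rw [hγ, hεd, Real.toNNReal_coe, ← ENNReal.coe_mul]
    apply ENNReal.coe_le_coe.mpr
    calc ρ / (γ + 1) * γ ≤ ρ / (γ + 1) * (γ + 1) := by
          exact mul_le_mul_right (le_add_of_nonneg_right zero_le_one) _
      _ = ρ := div_mul_cancel₀ ρ (by positivity)
  calc τ h ≤ (τ b + τ b + τ (star a * a)) + (ε.toNNReal : ℝ≥0∞) * τ (P * P) := h1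
    _ ≤ (τ b + τ b + τ (star a * a)) + ρ := add_le_add_right h2 _

end AbsOpAux

open AbsOpAux Filter Topology in
/-- If `g ∈ N` is invertible with `g - 1 ∈ L¹_τ(N)`, then `|g| = (g*g)^{1/2}` is
invertible and `|g| - 1 ∈ L¹_τ(N)`. -/
theorem absOp_of_GL1_memL1 (N : VonNeumannAlgebra H)
    (τ : (H →L[ℂ] H) → ℝ≥0∞) (hτ : IsFNSTrace N τ)
    (g : H →L[ℂ] H) (hgN : g ∈ N) (hg : IsUnit g) (hg1 : MemL1 N τ (g - 1)) :
    IsUnit (absOp g) ∧ MemL1 N τ (absOp g - 1) := by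
  obtain ⟨hg1N, hg1fin⟩ := hg1
  set a := g - 1 with had
  have haN : a ∈ N := sub_mem hgN (one_mem _)
  have hc0 : (0 : H →L[ℂ] H) ≤ star a * a := star_mul_self_nonneg a
  have hcsa : IsSelfAdjoint (star a * a) := .of_nonneg hc0
  have hcN : star a * a ∈ N := mul_mem (star_mem haN) haN
  -- `b = |a|`
  have habs : absOp a = cfc Real.sqrt (star a * a) := sqrt_eq_cfc_real hc0
  have hbfin : τ (cfc Real.sqrt (star a * a)) < ∞ := by rw [← habs]; exact hg1fin
  have hbN : cfc Real.sqrt (star a * a) ∈ N := vN_cfc_mem N hcsa hcN _ Real.continuous_sqrt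
  have hb0 : (0 : H →L[ℂ] H) ≤ cfc Real.sqrt (star a * a) :=
    cfc_nonneg fun s _ => Real.sqrt_nonneg s
  -- `τ (a* a) < ∞`
  have hcfin : τ (star a * a) < ∞ := by
    have hle : star a * a ≤ ‖a‖ • cfc Real.sqrt (star a * a) := by
      rw [← cfc_const_mul ‖a‖ Real.sqrt (star a * a) Real.continuous_sqrt.continuousOn]
      conv_lhs => rw [← cfc_id' ℝ (star a * a) hcsa]
      refine cfc_mono (fun s hs => ?_) (by fun_prop) (by fun_prop)
      have hs0 : 0 ≤ s := spectrum_nonneg_of_nonneg hc0 hs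
      have hsle : s ≤ ‖a‖ * ‖a‖ := by
        have h1 : ‖s‖ ≤ ‖star a * a‖ * ‖(1 : H →L[ℂ] H)‖ :=
          spectrum.norm_le_norm_mul_of_mem hs
        have h1b : ‖(1 : H →L[ℂ] H)‖ ≤ 1 := ContinuousLinearMap.norm_id_le
        have h1c : ‖s‖ ≤ ‖star a * a‖ := by
          calc ‖s‖ ≤ ‖star a * a‖ * ‖(1 : H →L[ℂ] H)‖ := h1
            _ ≤ ‖star a * a‖ * 1 := by
                exact mul_le_mul_of_nonneg_left h1b (norm_nonneg _)
            _ = ‖star a * a‖ := mul_one _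
        rwa [Real.norm_of_nonneg hs0, CStarRing.norm_star_mul_self] at h1c
      have h2 : Real.sqrt s ≤ ‖a‖ := by
        have := Real.sqrt_le_sqrt hsle
        rwa [Real.sqrt_mul_self (norm_nonneg a)] at this
      calc s = Real.sqrt s * Real.sqrt s := (Real.mul_self_sqrt hs0).symm
        _ ≤ ‖a‖ * Real.sqrt s :=
            mul_le_mul_of_nonneg_right h2 (Real.sqrt_nonneg s)
    have hτ1 : τ (star a * a) ≤ τ (‖a‖ • cfc Real.sqrt (star a * a)) :=
      hτ.monotone _ _ hcN (vN_smul_mem N hbN ‖a‖) hc0 hle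
    have hτ2 : τ (‖a‖ • cfc Real.sqrt (star a * a))
        = (‖a‖₊ : ℝ≥0∞) * τ (cfc Real.sqrt (star a * a)) := by
      rw [← hτ.homogeneous ‖a‖₊ _ hbN hb0]
      congr 1
    calc τ (star a * a) ≤ (‖a‖₊ : ℝ≥0∞) * τ (cfc Real.sqrt (star a * a)) :=
          hτ1.trans hτ2.le
      _ < ∞ := ENNReal.mul_lt_top ENNReal.coe_lt_top hbfin
  -- `G = g* g`
  have hG0 : (0 : H →L[ℂ] H) ≤ star g * g := star_mul_self_nonneg g
  have hGsa : IsSelfAdjoint (star g * g) := .of_nonneg hG0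
  have hGN : star g * g ∈ N := mul_mem (star_mem hgN) hgN
  have hspecG : ∀ t ∈ spectrum ℝ (star g * g), 0 ≤ t :=
    fun t ht => spectrum_nonneg_of_nonneg hG0 ht
  have hga : g = a + 1 := by rw [had]; abel
  have hGdec : star g * g - 1 = star a * a + (a + star a) := by
    calc star g * g - 1 = star (a + 1) * (a + 1) - 1 := by rw [← hga]
      _ = star a * a + (a + star a) := by rw [star_add, star_one]; noncomm_ring
  have hXeq : cfc (fun t : ℝ => t - 1) (star g * g) = star g * g - 1 := by
    rw [cfc_sub (fun t : ℝ => t) (fun _ => 1) (star g * g) (by fun_prop) (by fun_prop),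
      cfc_id' ℝ (star g * g) hGsa, cfc_const_one ℝ (star g * g) hGsa]
  have h1Xeq : cfc (fun t : ℝ => 1 - t) (star g * g) = 1 - star g * g := by
    rw [cfc_sub (fun _ => 1) (fun t : ℝ => t) (star g * g) (by fun_prop) (by fun_prop),
      cfc_id' ℝ (star g * g) hGsa, cfc_const_one ℝ (star g * g) hGsa]
  have hnegc : star (-a) * (-a) = star a * a := by rw [star_neg, neg_mul_neg]
  -- sequence data
  set m : ℕ → ℝ := fun n => (n : ℝ) + 2 with hmd
  have hm : ∀ n, 0 < m n := fun n => by positivity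
  -- the main estimate for the positive/negative parts
  have posPart : ∀ (a' : H →L[ℂ] H), a' ∈ N → star a' * a' = star a * a →
      ∀ (e : ℝ → ℝ), Continuous e →
      (cfc (fun t : ℝ => e t) (star g * g) ≤ a' + star a' + star a * a) →
      τ (cfc (fun t : ℝ => max (e t) 0) (star g * g))
        ≤ τ (cfc Real.sqrt (star a * a)) + τ (cfc Real.sqrt (star a * a))
          + τ (star a * a) := by
    intro a' ha'N ha'c e he hXle
    set X := cfc (fun t : ℝ => e t) (star g * g) with hXd
    set P : ℕ → (H →L[ℂ] H) := fun n => cfc (fun t : ℝ => phig (m n) (e t)) (star g * g)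
      with hPd
    set hseq : ℕ → (H →L[ℂ] H) := fun n => cfc (fun t : ℝ => Fg (m n) (e t)) (star g * g)
      with hhd
    set Xp := cfc (fun t : ℝ => max (e t) 0) (star g * g) with hXpd
    have contPn : ∀ n, Continuous fun t : ℝ => phig (m n) (e t) :=
      fun n => (phig_cont (m n)).comp he
    have contFn : ∀ n, Continuous fun t : ℝ => Fg (m n) (e t) :=
      fun n => (Fg_cont (m n)).comp he
    have contE : Continuous fun t : ℝ => max (e t) 0 := he.max continuous_const
    have hPmem : ∀ n, P n ∈ N := fun n => vN_cfc_mem N hGsa hGN _ (contPn n)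
    have hhmem : ∀ n, hseq n ∈ N := fun n => vN_cfc_mem N hGsa hGN _ (contFn n)
    have hXpmem : Xp ∈ N := vN_cfc_mem N hGsa hGN _ contE
    have hh0 : ∀ n, (0 : H →L[ℂ] H) ≤ hseq n :=
      fun n => cfc_nonneg fun t _ => Fg_nonneg _ _ (hm n)
    have hPsa : ∀ n, IsSelfAdjoint (P n) := fun n => cfc_predicate _ _
    have hP1 : ∀ n, P n * P n ≤ 1 := by
      intro n
      rw [hPd]
      rw [← cfc_mul _ _ (star g * g) (contPn n).continuousOn (contPn n).continuousOn]
      exact cfc_le_one _ _ fun t _ =>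
        mul_le_one₀ (phig_le_one _ _) (phig_nonneg _ _) (phig_le_one _ _)
    have hPXP : ∀ n, hseq n = P n * (X * P n) := by
      intro n
      calc hseq n = cfc (fun t : ℝ => phig (m n) (e t) * (e t * phig (m n) (e t)))
            (star g * g) := rfl
        _ = P n * cfc (fun t : ℝ => e t * phig (m n) (e t)) (star g * g) := by
            rw [cfc_mul _ (fun t : ℝ => e t * phig (m n) (e t)) (star g * g) (contPn n).continuousOn
              (he.mul (contPn n)).continuousOn]
        _ = P n * (X * P n) := by
            rw [cfc_mul _ _ (star g * g) he.continuousOn (contPn n).continuousOn]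
    have hhle : ∀ n, hseq n ≤ P n * (a' + star a') * P n + P n * (star a' * a') * P n := by
      intro n
      rw [hPXP n, ha'c]
      have hconj : P n * X * P n ≤ P n * (a' + star a' + star a * a) * P n := by
        have := star_left_conjugate_le_conjugate hXle (P n)
        rwa [(hPsa n).star_eq] at this
      calc P n * (X * P n) = P n * X * P n := by rw [mul_assoc]
        _ ≤ P n * (a' + star a' + star a * a) * P n := hconj
        _ = P n * (a' + star a') * P n + P n * (star a * a) * P n := by noncomm_ring
    have hlow : ∀ n, (1 / m n) • (P n * P n) ≤ hseq n := by
      intro n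
      have e1 : P n * P n
          = cfc (fun t : ℝ => phig (m n) (e t) * phig (m n) (e t)) (star g * g) :=
        (cfc_mul _ _ (star g * g) (contPn n).continuousOn (contPn n).continuousOn).symm
      calc (1 / m n) • (P n * P n)
          = cfc (fun t : ℝ => (1 / m n) * (phig (m n) (e t) * phig (m n) (e t)))
            (star g * g) := by
            rw [e1, cfc_const_mul _ (fun t : ℝ => phig (m n) (e t) * phig (m n) (e t)) (star g * g)
              ((contPn n).mul (contPn n)).continuousOn]
        _ ≤ hseq n := cfc_mono (fun t _ => Fg_low (m n) (e t) (hm n))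
            (continuous_const.mul ((contPn n).mul (contPn n))).continuousOn
            (contFn n).continuousOn
    have hup : ∀ n, hseq n ≤ Xp :=
      fun n => cfc_mono (fun t _ => Fg_le (m n) (e t) (hm n))
        (contFn n).continuousOn contE.continuousOn
    have hmono : Monotone hseq := by
      refine monotone_nat_of_le_succ fun n => ?_
      refine cfc_mono (fun t _ => Fg_mono_m (e t) (hm n) ?_)
        (contFn n).continuousOn (contFn (n + 1)).continuousOn
      rw [hmd]; push_cast; linarith
    have hnorm : ∀ n, ‖Xp - hseq n‖ ≤ 2 / m n := by
      intro n
      have e2 : Xp - hseq n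
          = cfc (fun t : ℝ => max (e t) 0 - Fg (m n) (e t)) (star g * g) := by
        rw [hXpd, hhd,
          cfc_sub (fun t : ℝ => max (e t) 0) (fun t : ℝ => Fg (m n) (e t)) (star g * g)
            contE.continuousOn (contFn n).continuousOn]
      rw [e2]
      refine norm_cfc_le (by positivity) fun t _ => ?_
      rw [Real.norm_eq_abs, abs_of_nonneg (by linarith [Fg_le (m n) (e t) (hm n)])]
      exact Fg_approx _ _ (hm n)
    have htend : Tendsto hseq atTop (𝓝 Xp) := by
      rw [tendsto_iff_dist_tendsto_zero]
      refine squeeze_zero (g := fun n => 2 / m n) (fun n => dist_nonneg) (fun n => ?_) ?_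
      · rw [dist_eq_norm, norm_sub_rev]
        exact hnorm n
      · refine Tendsto.div_atTop tendsto_const_nhds ?_
        exact tendsto_atTop_add_const_right atTop 2 tendsto_natCast_atTop_atTop
    have hlub : IsLUB (Set.range hseq) Xp := by
      constructor
      · rintro z ⟨n, rfl⟩
        exact hup n
      · intro w hw
        exact le_of_tendsto htend (Eventually.of_forall fun n => hw ⟨n, rfl⟩)
    have hnormal : τ Xp = ⨆ n, τ (hseq n) :=
      hτ.normal ℕ inferInstance hseq Xp hhmem hh0 hmono hlub
    have hcfin' : τ (star a' * a') < ∞ := by rw [ha'c]; exact hcfin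
    have hbfin' : τ (cfc Real.sqrt (star a' * a')) < ∞ := by rw [ha'c]; exact hbfin
    have hPfin : ∀ n, τ (P n * P n) < ∞ := fun n =>
      tau_Psq_fin hτ (show (0:ℝ) < 1 / m n by positivity) ha'N (hPmem n) (hPsa n)
        (hP1 n) (hlow n) (hhle n) hcfin'
    have hest : ∀ n, τ (hseq n)
        ≤ τ (cfc Real.sqrt (star a * a)) + τ (cfc Real.sqrt (star a * a))
          + τ (star a * a) := by
      intro n
      have := tau_est hτ ha'N (hPmem n) (hPsa n) (hP1 n) (hhmem n) (hh0 n) (hhle n)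
        (hPfin n) hcfin' hbfin'
      rwa [ha'c] at this
    rw [hnormal]
    exact iSup_le hest
  -- apply to the positive and negative parts
  have hposX : cfc (fun t : ℝ => t - 1) (star g * g) ≤ a + star a + star a * a := by
    rw [hXeq, hGdec]
    exact le_of_eq (by abel)
  have hτXp := posPart a haN rfl (fun t => t - 1) (by fun_prop) hposX
  have hnegX : cfc (fun t : ℝ => 1 - t) (star g * g) ≤ (-a) + star (-a) + star a * a := by
    rw [h1Xeq]
    have h1 : (1 : H →L[ℂ] H) - star g * g = ((-a) + star (-a)) - star a * a := by
      have h2 : (1 : H →L[ℂ] H) - star g * g = -(star g * g - 1) := by abel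
      rw [h2, hGdec, star_neg]
      abel
    rw [h1]
    have h3 : ((-a) + star (-a)) - star a * a ≤ ((-a) + star (-a)) + star a * a := by
      have h4 := hc0
      calc ((-a) + star (-a)) - star a * a ≤ (-a) + star (-a) := sub_le_self _ h4
        _ ≤ ((-a) + star (-a)) + star a * a := le_add_of_nonneg_right h4
    exact h3
  have hτXm := posPart (-a) (neg_mem haN) hnegc (fun t => 1 - t) (by fun_prop) hnegX
  -- finiteness of `τ (cfc |t - 1|)`
  have hKfin : τ (cfc Real.sqrt (star a * a)) + τ (cfc Real.sqrt (star a * a))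
      + τ (star a * a) < ∞ :=
    ENNReal.add_lt_top.mpr ⟨ENNReal.add_lt_top.mpr ⟨hbfin, hbfin⟩, hcfin⟩
  have contXp : Continuous fun t : ℝ => max (t - 1) 0 := by fun_prop
  have contXm : Continuous fun t : ℝ => max (1 - t) 0 := by fun_prop
  have hXpmem : cfc (fun t : ℝ => max (t - 1) 0) (star g * g) ∈ N :=
    vN_cfc_mem N hGsa hGN _ contXp
  have hXmmem : cfc (fun t : ℝ => max (1 - t) 0) (star g * g) ∈ N :=
    vN_cfc_mem N hGsa hGN _ contXm
  have hXA : cfc (fun t : ℝ => |t - 1|) (star g * g)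
      = cfc (fun t : ℝ => max (t - 1) 0) (star g * g)
        + cfc (fun t : ℝ => max (1 - t) 0) (star g * g) := by
    rw [← cfc_add (a := star g * g) _ _ contXp.continuousOn contXm.continuousOn]
    exact cfc_congr fun t _ => abs_eq_maxsum t
  have hXAfin : τ (cfc (fun t : ℝ => |t - 1|) (star g * g)) < ∞ := by
    rw [hXA, hτ.additive _ _ hXpmem hXmmem
      (cfc_nonneg fun t _ => le_max_right _ _) (cfc_nonneg fun t _ => le_max_right _ _)]
    exact ENNReal.add_lt_top.mpr ⟨lt_of_le_of_lt hτXp hKfin, lt_of_le_of_lt hτXm hKfin⟩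
  -- conclusion
  have hRdef : absOp g = cfc Real.sqrt (star g * g) := sqrt_eq_cfc_real hG0
  have hRN : absOp g ∈ N := by
    rw [hRdef]; exact vN_cfc_mem N hGsa hGN _ Real.continuous_sqrt
  have hGunit : IsUnit (star g * g) := hg.star.mul hg
  have hunit : IsUnit (absOp g) := by
    rw [hRdef]
    refine (isUnit_cfc_iff Real.sqrt (star g * g)
      Real.continuous_sqrt.continuousOn hGsa).mpr fun t ht => ?_
    have ht0 : 0 ≤ t := hspecG t ht
    have htne : t ≠ 0 := fun h0 => (spectrum.zero_notMem ℝ hGunit) (h0 ▸ ht)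
    exact Real.sqrt_ne_zero'.mpr (lt_of_le_of_ne ht0 (Ne.symm htne))
  have hR1 : absOp g - 1 = cfc (fun t : ℝ => Real.sqrt t - 1) (star g * g) := by
    have h5 := cfc_sub Real.sqrt (fun _ : ℝ => 1) (star g * g)
      Real.continuous_sqrt.continuousOn (by fun_prop)
    rw [cfc_const_one ℝ (star g * g) hGsa] at h5
    rw [hRdef, ← h5]
  have hsa1 : IsSelfAdjoint (absOp g - 1) := by rw [hR1]; exact cfc_predicate _ _
  have contS : Continuous fun t : ℝ => Real.sqrt t - 1 := by fun_prop
  have contSA : Continuous fun t : ℝ => |Real.sqrt t - 1| := contS.abs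
  have hD : absOp (absOp g - 1) = cfc (fun t : ℝ => |Real.sqrt t - 1|) (star g * g) := by
    have hsq : (absOp g - 1) * (absOp g - 1)
        = cfc (fun t : ℝ => (Real.sqrt t - 1) * (Real.sqrt t - 1)) (star g * g) := by
      rw [hR1, ← cfc_mul _ _ (star g * g) contS.continuousOn contS.continuousOn]
    rw [absOp, hsa1.star_eq, hsq]
    refine CFC.sqrt_unique ?_ (cfc_nonneg fun t _ => abs_nonneg _)
    rw [← cfc_mul _ _ (star g * g) contSA.continuousOn contSA.continuousOn]
    exact cfc_congr fun t _ => abs_mul_abs_self _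
  have hDle : absOp (absOp g - 1) ≤ cfc (fun t : ℝ => |t - 1|) (star g * g) := by
    rw [hD]
    exact cfc_mono (fun t ht => abs_sqrt_sub_one_le (hspecG t ht))
      contSA.continuousOn (by fun_prop)
  have hDN : absOp (absOp g - 1) ∈ N := by
    rw [hD]; exact vN_cfc_mem N hGsa hGN _ contSA
  have hXAN : cfc (fun t : ℝ => |t - 1|) (star g * g) ∈ N :=
    vN_cfc_mem N hGsa hGN _ (by fun_prop)
  have hD0 : (0 : H →L[ℂ] H) ≤ absOp (absOp g - 1) := by
    rw [hD]; exact cfc_nonneg fun t _ => abs_nonneg _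
  have hτD : τ (absOp (absOp g - 1)) ≤ τ (cfc (fun t : ℝ => |t - 1|) (star g * g)) :=
    hτ.monotone _ _ hDN hXAN hD0 hDle
  exact ⟨hunit, sub_mem hRN (one_mem _), lt_of_le_of_lt hτD hXAfin⟩
end
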